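/- Let G be a finite simple connected graph with maximum degree Δ, and suppose that for every edge xy of G one has κ_LLY(x,y) ≥ κ for some real κ > 0. Then |V(G)| ≤ 1 + ∑_{j=1}^{⌊2/κ⌋} Δ^j · ∏_{i=1}^{j−1} (1 − iκ/2). -/

import Mathlib

open Finset

noncomputable section

/-- The (normalized) graph Laplacian `Δf(x) = (1/deg x) ∑_{y ~ x} (f y - f x)`. -/
def graphLap {V : Type*} [Fintype V] (G : SimpleGraph V) [DecidableRel G.Adj]
    (f : V → ℝ) (x : V) : ℝ :=
  (G.degree x : ℝ)⁻¹ * ∑ y ∈ G.neighborFinset x, (f y - f x)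

/-- `f` is 1-Lipschitz with respect to the graph distance. -/
def IsLip1 {V : Type*} (G : SimpleGraph V) (f : V → ℝ) : Prop :=
  ∀ u v : V, |f u - f v| ≤ G.dist u v

/-- Lin–Lu–Yau curvature of a pair of vertices, via the limit-free
(Münch–Wojciechowski) formulation. -/
def kappaLLY {V : Type*} [Fintype V] (G : SimpleGraph V) [DecidableRel G.Adj]
    (x y : V) : ℝ :=
  sInf { r : ℝ | ∃ f : V → ℝ, IsLip1 G f ∧ f y - f x = G.dist x y ∧
      r = (graphLap G f x - graphLap G f y) / G.dist x y }

/-- `G` contains a cycle of length `n` as a subgraph: `n` distinct vertices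
arranged cyclically so that consecutive ones are adjacent. -/
def HasCycleLen {V : Type*} (G : SimpleGraph V) (n : ℕ) [NeZero n] : Prop :=
  ∃ c : Fin n → V, Function.Injective c ∧ ∀ i : Fin n, G.Adj (c i) (c (i + 1))

section Aux
set_option linter.unusedSectionVars false

variable {V : Type*} [Fintype V] [DecidableEq V] (G : SimpleGraph V) [DecidableRel G.Adj]

lemma lap_abs_le {f : V → ℝ} (hf : IsLip1 G f) (x : V) : |graphLap G f x| ≤ 1 := by
  rw [graphLap, abs_mul]
  rcases Nat.eq_zero_or_pos (G.degree x) with h | h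
  · simp [h]
  · have hd : (0:ℝ) < G.degree x := by exact_mod_cast h
    have h1 : |∑ y ∈ G.neighborFinset x, (f y - f x)| ≤ (G.degree x : ℝ) := by
      calc |∑ y ∈ G.neighborFinset x, (f y - f x)|
          ≤ ∑ y ∈ G.neighborFinset x, |f y - f x| := Finset.abs_sum_le_sum_abs _ _
        _ ≤ ∑ y ∈ G.neighborFinset x, 1 := by
            refine Finset.sum_le_sum fun y hy => ?_
            have hadj : G.Adj x y := by simpa using hy
            have h2 := hf y x
            rw [SimpleGraph.dist_comm, SimpleGraph.dist_eq_one_iff_adj.mpr hadj] at h2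
            simpa using h2
        _ = (G.degree x : ℝ) := by
            rw [Finset.sum_const, SimpleGraph.card_neighborFinset_eq_degree]; simp
    have : |(G.degree x : ℝ)⁻¹| = (G.degree x : ℝ)⁻¹ := abs_of_nonneg (by positivity)
    rw [this, inv_mul_le_iff₀ hd]
    simpa using h1

lemma curv_step {κ : ℝ}
    (hcurv : ∀ x y : V, G.Adj x y → κ ≤ kappaLLY G x y)
    {x y : V} (hxy : G.Adj x y) {f : V → ℝ} (hf : IsLip1 G f)
    (hfd : f y - f x = G.dist x y) :
    graphLap G f y ≤ graphLap G f x - κ := by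
  have hd1 : G.dist x y = 1 := SimpleGraph.dist_eq_one_iff_adj.mpr hxy
  have hb : ∀ r ∈ { r : ℝ | ∃ g : V → ℝ, IsLip1 G g ∧ g y - g x = G.dist x y ∧
      r = (graphLap G g x - graphLap G g y) / G.dist x y }, -2 ≤ r := by
    rintro r ⟨g, hg, -, rfl⟩
    rw [hd1]
    have h1 := abs_le.mp (lap_abs_le G hg x)
    have h2 := abs_le.mp (lap_abs_le G hg y)
    simp only [Nat.cast_one, div_one]
    linarith [h1.1, h1.2, h2.1, h2.2]
  have hmem : (graphLap G f x - graphLap G f y) / G.dist x y ∈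
      { r : ℝ | ∃ g : V → ℝ, IsLip1 G g ∧ g y - g x = G.dist x y ∧
        r = (graphLap G g x - graphLap G g y) / G.dist x y } := ⟨f, hf, hfd, rfl⟩
  have hle : kappaLLY G x y ≤ (graphLap G f x - graphLap G f y) / G.dist x y :=
    csInf_le ⟨-2, hb⟩ hmem
  have hk := (hcurv x y hxy).trans hle
  rw [hd1] at hk
  simp only [Nat.cast_one, div_one] at hk
  linarith

lemma pred_exists (hconn : G.Connected) {x₀ : V} {n : ℕ} {v : V}
    (hv : G.dist x₀ v = n + 1) : ∃ u, G.Adj u v ∧ G.dist x₀ u = n := by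
  obtain ⟨p, hp⟩ := hconn.exists_walk_length_eq_dist x₀ v
  set q := p.reverse with hq
  have hql : q.length = n + 1 := by rw [hq, SimpleGraph.Walk.length_reverse, hp, hv]
  have hnil : ¬ q.Nil := by
    rw [SimpleGraph.Walk.nil_iff_length_eq]; omega
  refine ⟨q.getVert 1, (SimpleGraph.Walk.adj_snd (p := q) hnil).symm, ?_⟩
  have htl : q.tail.length = n := by
    have := SimpleGraph.Walk.length_tail_add_one hnil
    omega
  have h1 : G.dist (q.getVert 1) x₀ ≤ n := htl ▸ SimpleGraph.dist_le q.tail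
  have h2 : G.dist x₀ v ≤ G.dist x₀ (q.getVert 1) + G.dist (q.getVert 1) v :=
    hconn.dist_triangle
  have h3 : G.dist (q.getVert 1) v = 1 := by
    rw [SimpleGraph.dist_comm]
    exact SimpleGraph.dist_eq_one_iff_adj.mpr (SimpleGraph.Walk.adj_snd (p := q) hnil)
  rw [SimpleGraph.dist_comm] at h1
  omega

lemma deg_pos (hconn : G.Connected) (hcard : 1 < Fintype.card V) (v : V) :
    0 < G.degree v := by
  obtain ⟨w, hw⟩ := Fintype.exists_ne_of_one_lt_card hcard v
  have hpos : 0 < G.dist v w := hconn.pos_dist_of_ne (Ne.symm hw)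
  obtain ⟨p, hp⟩ := hconn.exists_walk_length_eq_dist v w
  have hnil : ¬ p.Nil := by
    rw [SimpleGraph.Walk.nil_iff_length_eq]; omega
  rw [SimpleGraph.degree_pos_iff_exists_adj]
  exact ⟨p.getVert 1, SimpleGraph.Walk.adj_snd (p := p) hnil⟩

end Aux

theorem LLY_volume_bound {V : Type*} [Fintype V] [DecidableEq V] (G : SimpleGraph V)
    [DecidableRel G.Adj] (hconn : G.Connected)
    (κ : ℝ) (hκ : 0 < κ)
    (hcurv : ∀ x y : V, G.Adj x y → κ ≤ kappaLLY G x y) :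
    (Fintype.card V : ℝ) ≤ 1 + ∑ j ∈ Finset.Icc 1 ⌊2 / κ⌋₊,
      (G.maxDegree : ℝ) ^ j * ∏ i ∈ Finset.Icc 1 (j - 1), (1 - i * κ / 2) := by
  classical
  have hne : Nonempty V := hconn.nonempty
  set M := ⌊2 / κ⌋₊ with hM
  rcases le_or_gt (Fintype.card V) 1 with hcard | hcard
  · -- trivial case: a single vertex
    have hc1 : Fintype.card V = 1 := le_antisymm hcard Fintype.card_pos
    have hdeg : G.maxDegree = 0 := by
      have h := G.maxDegree_le_of_forall_degree_le 0 (fun v => by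
        have := G.degree_lt_card_verts v; omega)
      omega
    have hterm : ∀ j ∈ Finset.Icc 1 M,
        (G.maxDegree : ℝ) ^ j * ∏ i ∈ Finset.Icc 1 (j - 1), (1 - (i:ℝ) * κ / 2) = 0 := by
      intro j hj
      have h1 : 1 ≤ j := (Finset.mem_Icc.mp hj).1
      rw [hdeg]
      norm_num
      left
      omega
    rw [Finset.sum_congr rfl hterm]
    rw [hc1]
    simp
  · obtain ⟨x₀⟩ := hne
    set f : V → ℝ := fun v => (G.dist x₀ v : ℝ) with hfdef
    have hLip : IsLip1 G f := by
      intro u v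
      have h1 : G.dist x₀ u ≤ G.dist x₀ v + G.dist v u := hconn.dist_triangle
      have h2 : G.dist x₀ v ≤ G.dist x₀ u + G.dist u v := hconn.dist_triangle
      rw [show G.dist v u = G.dist u v from SimpleGraph.dist_comm] at h1
      rw [abs_sub_le_iff]
      constructor
      · have h3 : (G.dist x₀ u : ℝ) ≤ G.dist x₀ v + G.dist u v := by exact_mod_cast h1
        simp only [hfdef]; linarith
      · have h3 : (G.dist x₀ v : ℝ) ≤ G.dist x₀ u + G.dist u v := by exact_mod_cast h2
        simp only [hfdef]; linarith
    have hdegpos : ∀ v : V, 0 < G.degree v := deg_pos G hconn hcard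
    have hlap : ∀ (n : ℕ) (v : V), G.dist x₀ v = n → graphLap G f v ≤ 1 - n * κ := by
      intro n
      induction n with
      | zero =>
        intro v hv
        have hv0 : x₀ = v := hconn.dist_eq_zero_iff.mp hv
        subst hv0
        have hsum : ∀ y ∈ G.neighborFinset x₀, f y - f x₀ = 1 := by
          intro y hy
          have hadj : G.Adj x₀ y := by simpa using hy
          simp only [hfdef]
          rw [SimpleGraph.dist_eq_one_iff_adj.mpr hadj, SimpleGraph.dist_self]
          norm_num
        rw [graphLap, Finset.sum_congr rfl hsum, Finset.sum_const,
          SimpleGraph.card_neighborFinset_eq_degree]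
        have hd : (0:ℝ) < G.degree x₀ := by exact_mod_cast hdegpos x₀
        rw [nsmul_eq_mul, mul_one, inv_mul_cancel₀ hd.ne']
        norm_num
      | succ n IH =>
        intro v hv
        obtain ⟨u, hadj, hu⟩ := pred_exists G hconn hv
        have hfd : f v - f u = G.dist u v := by
          simp only [hfdef]
          rw [hv, hu, SimpleGraph.dist_eq_one_iff_adj.mpr hadj]
          push_cast; ring
        have hstep := curv_step G hcurv hadj hLip hfd
        have hIH := IH u hu
        push_cast
        linarith
    set Fwd : V → Finset V := fun v =>
      (G.neighborFinset v).filter (fun y => G.dist x₀ y = G.dist x₀ v + 1) with hFwd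
    have hfwd : ∀ v : V, ((Fwd v).card : ℝ) ≤
        (G.degree v : ℝ) * (1 - (G.dist x₀ v : ℝ) * κ / 2) := by
      intro v
      have hd : (0:ℝ) < G.degree v := by exact_mod_cast hdegpos v
      have hlapv := hlap (G.dist x₀ v) v rfl
      have hsum : (G.degree v : ℝ) * graphLap G f v
          = ∑ y ∈ G.neighborFinset v, (f y - f v) := by
        rw [graphLap, ← mul_assoc, mul_inv_cancel₀ hd.ne', one_mul]
      have hsplit := Finset.sum_filter_add_sum_filter_not (G.neighborFinset v)
        (fun y => G.dist x₀ y = G.dist x₀ v + 1) (fun y => f y - f v)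
      have h1 : ∑ y ∈ Fwd v, (f y - f v) = ((Fwd v).card : ℝ) := by
        have hone : ∀ y ∈ Fwd v, f y - f v = 1 := by
          intro y hy
          have hyd := (Finset.mem_filter.mp hy).2
          simp only [hfdef]
          rw [hyd]; push_cast; ring
        rw [Finset.sum_congr rfl hone, Finset.sum_const, nsmul_eq_mul, mul_one]
      have h2 : -((((G.neighborFinset v).filter
            (fun y => ¬ G.dist x₀ y = G.dist x₀ v + 1)).card : ℝ))
          ≤ ∑ y ∈ (G.neighborFinset v).filter
            (fun y => ¬ G.dist x₀ y = G.dist x₀ v + 1), (f y - f v) := by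
        have hterm : ∀ y ∈ (G.neighborFinset v).filter
            (fun y => ¬ G.dist x₀ y = G.dist x₀ v + 1), (-1 : ℝ) ≤ f y - f v := by
          intro y hy
          have hadj : G.Adj v y := by simpa using (Finset.mem_filter.mp hy).1
          have hl := hLip v y
          rw [SimpleGraph.dist_eq_one_iff_adj.mpr hadj] at hl
          have hl2 := abs_le.mp hl
          push_cast at hl2
          linarith [hl2.1, hl2.2]
        calc -((((G.neighborFinset v).filter
              (fun y => ¬ G.dist x₀ y = G.dist x₀ v + 1)).card : ℝ))
            = ∑ _y ∈ (G.neighborFinset v).filter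
              (fun y => ¬ G.dist x₀ y = G.dist x₀ v + 1), (-1 : ℝ) := by
              rw [Finset.sum_const, nsmul_eq_mul]; ring
          _ ≤ _ := Finset.sum_le_sum hterm
      have hcards : (Fwd v).card + ((G.neighborFinset v).filter
          (fun y => ¬ G.dist x₀ y = G.dist x₀ v + 1)).card = G.degree v := by
        rw [hFwd]
        rw [Finset.card_filter_add_card_filter_not,
          SimpleGraph.card_neighborFinset_eq_degree]
      have hcards' : (((G.neighborFinset v).filter
          (fun y => ¬ G.dist x₀ y = G.dist x₀ v + 1)).card : ℝ)
          = (G.degree v : ℝ) - (Fwd v).card := by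
        have := hcards; push_cast [← this]; ring
      have hup : (G.degree v : ℝ) * graphLap G f v
          ≤ (G.degree v : ℝ) * (1 - (G.dist x₀ v : ℝ) * κ) :=
        mul_le_mul_of_nonneg_left hlapv hd.le
      rw [hsum, ← hsplit, h1] at hup
      nlinarith [h2, hcards', hup]
    have hdiam : ∀ v : V, G.dist x₀ v ≤ M := by
      intro v
      have hfv := hfwd v
      have hd : (0:ℝ) < G.degree v := by exact_mod_cast hdegpos v
      have hF : (0:ℝ) ≤ ((Fwd v).card : ℝ) := Nat.cast_nonneg _
      have h05 : 0 ≤ 1 - (G.dist x₀ v : ℝ) * κ / 2 := by nlinarith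
      have hdv : (G.dist x₀ v : ℝ) ≤ 2 / κ := by
        rw [le_div_iff₀ hκ]; linarith
      exact Nat.le_floor hdv
    set S : ℕ → Finset V := fun j => Finset.univ.filter (fun v => G.dist x₀ v = j) with hS
    have hS0 : S 0 = {x₀} := by
      ext v
      simp only [hS, Finset.mem_filter, Finset.mem_univ, true_and, Finset.mem_singleton]
      rw [← hconn.dist_eq_zero_iff]
      constructor
      · intro h; rw [SimpleGraph.dist_comm]; exact h
      · intro h; rw [SimpleGraph.dist_comm]; exact h
    have hsub : ∀ j : ℕ, S (j+1) ⊆ (S j).biUnion Fwd := by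
      intro j v hv
      have hvd : G.dist x₀ v = j + 1 := (Finset.mem_filter.mp hv).2
      obtain ⟨u, hadj, hu⟩ := pred_exists G hconn hvd
      refine Finset.mem_biUnion.mpr ⟨u, ?_, ?_⟩
      · simp [hS, hu]
      · refine Finset.mem_filter.mpr ⟨?_, ?_⟩
        · simpa using hadj
        · rw [hu]; exact hvd
    have hstepS : ∀ j : ℕ, 0 ≤ 1 - (j:ℝ) * κ / 2 →
        ((S (j+1)).card : ℝ) ≤ ((S j).card : ℝ) *
          ((G.maxDegree : ℝ) * (1 - (j:ℝ) * κ / 2)) := by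
      intro j hj0
      have h1 : (S (j+1)).card ≤ ∑ z ∈ S j, (Fwd z).card :=
        (Finset.card_le_card (hsub j)).trans Finset.card_biUnion_le
      have h2 : ((S (j+1)).card : ℝ) ≤ ∑ z ∈ S j, ((Fwd z).card : ℝ) := by
        exact_mod_cast h1
      refine h2.trans ?_
      have h3 : ∀ z ∈ S j, ((Fwd z).card : ℝ)
          ≤ (G.maxDegree : ℝ) * (1 - (j:ℝ) * κ / 2) := by
        intro z hz
        have hzd : G.dist x₀ z = j := (Finset.mem_filter.mp hz).2
        have hz1 := hfwd z
        rw [hzd] at hz1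
        refine hz1.trans ?_
        have hdegle : (G.degree z : ℝ) ≤ (G.maxDegree : ℝ) := by
          exact_mod_cast G.degree_le_maxDegree z
        exact mul_le_mul_of_nonneg_right hdegle hj0
      calc ∑ z ∈ S j, ((Fwd z).card : ℝ)
          ≤ ∑ _z ∈ S j, (G.maxDegree : ℝ) * (1 - (j:ℝ) * κ / 2) :=
            Finset.sum_le_sum h3
        _ = ((S j).card : ℝ) * ((G.maxDegree : ℝ) * (1 - (j:ℝ) * κ / 2)) := by
            rw [Finset.sum_const, nsmul_eq_mul]
    have harith : ∀ j : ℕ, j + 1 ≤ M → 0 ≤ 1 - (j:ℝ) * κ / 2 := by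
      intro j hj
      have h2 : ((j:ℝ) + 1) ≤ (M:ℝ) := by exact_mod_cast hj
      have h3 : (M : ℝ) ≤ 2 / κ := Nat.floor_le (by positivity)
      have h4 : (j:ℝ) ≤ 2/κ - 1 := by linarith
      have h5 : (j:ℝ) * κ ≤ (2/κ - 1) * κ := mul_le_mul_of_nonneg_right h4 hκ.le
      have hκκ : (2/κ) * κ = 2 := div_mul_cancel₀ 2 hκ.ne'
      nlinarith
    have hsphere : ∀ k : ℕ, k + 1 ≤ M →
        ((S (k+1)).card : ℝ) ≤ (G.maxDegree : ℝ) ^ (k+1) *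
          ∏ i ∈ Finset.Icc 1 k, (1 - (i:ℝ) * κ / 2) := by
      intro k
      induction k with
      | zero =>
        intro _
        have h0 := hstepS 0 (by norm_num)
        rw [hS0] at h0
        simpa using h0
      | succ k IH =>
        intro hk
        have hk' : k + 1 ≤ M := by omega
        have hnn := harith (k+1) hk
        have h0 := hstepS (k+1) hnn
        have hIH := IH hk'
        have hcnn : 0 ≤ (G.maxDegree : ℝ) * (1 - ((k+1 : ℕ):ℝ) * κ / 2) :=
          mul_nonneg (Nat.cast_nonneg _) hnn
        calc ((S (k+1+1)).card : ℝ)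
            ≤ ((S (k+1)).card : ℝ) * ((G.maxDegree : ℝ) * (1 - ((k+1:ℕ):ℝ) * κ / 2)) := h0
          _ ≤ ((G.maxDegree : ℝ) ^ (k+1) * ∏ i ∈ Finset.Icc 1 k, (1 - (i:ℝ) * κ / 2)) *
              ((G.maxDegree : ℝ) * (1 - ((k+1:ℕ):ℝ) * κ / 2)) :=
            mul_le_mul_of_nonneg_right hIH hcnn
          _ = (G.maxDegree : ℝ) ^ (k+1+1) *
              ∏ i ∈ Finset.Icc 1 (k+1), (1 - (i:ℝ) * κ / 2) := by
            rw [Finset.prod_Icc_succ_top (Nat.le_add_left 1 k)]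
            push_cast
            ring
    have hcount : Finset.univ.card = ∑ j ∈ Finset.range (M+1), (S j).card :=
      Finset.card_eq_sum_card_fiberwise
        (fun v _ => Finset.mem_range.mpr (Nat.lt_succ_of_le (hdiam v)))
    have hsplitR : Finset.range (M+1) = insert 0 (Finset.Icc 1 M) := by
      ext x
      simp only [Finset.mem_range, Finset.mem_insert, Finset.mem_Icc, Nat.lt_succ_iff]
      omega
    have h0not : (0:ℕ) ∉ Finset.Icc 1 M := by simp
    have hcR : Fintype.card V = 1 + ∑ j ∈ Finset.Icc 1 M, (S j).card := by
      rw [← Finset.card_univ, hcount, hsplitR, Finset.sum_insert h0not, hS0,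
        Finset.card_singleton]
    rw [hcR]
    push_cast
    refine add_le_add_right (Finset.sum_le_sum ?_) 1
    intro j hj
    obtain ⟨h1j, hjM⟩ := Finset.mem_Icc.mp hj
    obtain ⟨k, rfl⟩ := Nat.exists_eq_add_of_le h1j
    have hb := hsphere k (by omega)
    have he1 : 1 + k = k + 1 := by omega
    rw [he1]
    simpa using hb

end
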